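/- Let C be a skew cyclic code of length s over R₄ and let A be the set of nonzero polynomials of minimal degree in C. If A contains a monic skew polynomial, then C = ⟨g(x) + 2a(x)⟩ as a left R₄[x,θ₄]-submodule of R₄[x,θ₄]/⟨x^s−1⟩, where g(x) + 2a(x) is a right divisor of x^s−1 in R₄[x,θ₄], the mod-2 reduction of g(x) is a right divisor of x^s−1 in R₂[x,θ₂], and deg(a(x)) < deg(g(x)). -/

import Mathlib

set_option synthInstance.maxHeartbeats 1000000
set_option maxHeartbeats 2000000

noncomputable section
open Polynomial

abbrev Z4 : Type := ZMod 4
abbrev Z2 : Type := ZMod 2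

/-- The mod 2 reduction map `Z₄ → Z₂`. -/
def bar : Z4 →+* Z2 := ZMod.castHom (m := 2) (by norm_num) Z2

/-- The ring `R₄ = Z₄[x]/⟨h⟩` (for `h` basic primitive, the Galois ring `GR(4,m)`). -/
abbrev R4 (h : Z4[X]) : Type := Z4[X] ⧸ Ideal.span {h}

/-- The ring `R₂ = Z₂[x]/⟨h̄⟩` (for `h` basic primitive, the field `F_{2^m}`). -/
abbrev R2 (h : Z4[X]) : Type := Z2[X] ⧸ Ideal.span {h.map bar}

/-- `ξ`, the class of `x` in `R₄`. -/
def xi (h : Z4[X]) : R4 h := Ideal.Quotient.mk _ X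

/-- `ξ̄`, the class of `x` in `R₂`. -/
def xibar (h : Z4[X]) : R2 h := Ideal.Quotient.mk _ X

/-- The coefficientwise mod 2 reduction `R₄ → R₂`. -/
def barR (h : Z4[X]) : R4 h →+* R2 h :=
  Ideal.quotientMap (Ideal.span {h.map bar}) (Polynomial.mapRingHom bar)
    (by
      rw [Ideal.span_le]
      intro p hp
      simp only [Set.mem_singleton_iff] at hp
      subst hp
      exact Ideal.mem_comap.mpr (Ideal.subset_span (by simp)))

/-- The canonical representative (of degree `< deg h`) of an element of `R₄`. -/
def rep4 (h : Z4[X]) (α : R4 h) : Z4[X] := Quotient.out α %ₘ h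

/-- The canonical representative (of degree `< deg h̄`) of an element of `R₂`. -/
def rep2 (h : Z4[X]) (α : R2 h) : Z2[X] := Quotient.out α %ₘ (h.map bar)

/-- The Frobenius map `θ₄ : ∑ vᵢ ξ^i ↦ ∑ vᵢ ξ^{2i}` of `R₄`, as a bare function:
substitute `ξ²` in the canonical representative. -/
def thetaFun4 (h : Z4[X]) (α : R4 h) : R4 h := Polynomial.aeval (xi h ^ 2) (rep4 h α)

/-- The Frobenius map `θ₂ : ∑ vᵢ ξ̄^i ↦ ∑ vᵢ ξ̄^{2i}` of `R₂`, as a bare function. -/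
def thetaFun2 (h : Z4[X]) (α : R2 h) : R2 h := Polynomial.aeval (xibar h ^ 2) (rep2 h α)

/-- A lift `ι : R₂ → R₄` with `ι` mod 2 the identity: lift the coefficients of the
canonical representative from `{0,1}`. -/
def iota (h : Z4[X]) (α : R2 h) : R4 h :=
  Ideal.Quotient.mk _ ((rep2 h α).sum fun i a => C ((a.val : Z4)) * X ^ i)

/-- `h` is a monic basic primitive polynomial of degree `m`:  `h` is monic, its mod 2
reduction `h̄` is irreducible over `Z₂`, and the root `ξ̄` of `h̄` is a primitive
element, i.e. has multiplicative order `2^m - 1`. -/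
def BasicPrimitive (h : Z4[X]) (m : ℕ) : Prop :=
  h.Monic ∧ h.natDegree = m ∧ Irreducible (h.map bar) ∧ orderOf (xibar h) = 2 ^ m - 1

/-- The scalar multiplication `γ * (α,β) = (γ̄α, γβ)` making `R₂^r × R₄^s` (or any
mixed-alphabet tuple space) an `R₄`-module. -/
def smulStar (h : Z4[X]) {α β : Type*} (γ : R4 h) (v : (α → R2 h) × (β → R4 h)) :
    (α → R2 h) × (β → R4 h) :=
  (fun i => barR h γ * v.1 i, fun j => γ * v.2 j)

/-! ### Skew polynomial rings -/

/-- The additive endomorphism `p(x) ↦ pᶿ(x)·x` of `A[x]` (the twisted shift). -/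
def Tmap {A : Type*} [CommRing A] (θ : A →+* A) : AddMonoid.End (Polynomial A) :=
  (AddMonoidHom.mulRight (X : Polynomial A)).comp (Polynomial.mapRingHom θ).toAddMonoidHom

/-- Left multiplication by the constant `a`, as an additive endomorphism of `A[x]`. -/
def Lmap {A : Type*} [CommRing A] (a : A) : AddMonoid.End (Polynomial A) :=
  AddMonoidHom.mulLeft (C a)

/-- The skew polynomial ring `A[x;θ]`, realized as the subring of additive
endomorphisms of `A[x]` generated by the constants (acting by left multiplication)
and the twisted shift `Tmap θ`.  In this model multiplication is composition, so
`(a·xᵏ)·(b·xʲ) = a θᵏ(b) x^{k+j}`, i.e. `x·a = θ(a)·x`. -/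
def SkewPolySubring (A : Type*) [CommRing A] (θ : A →+* A) :
    Subring (AddMonoid.End (Polynomial A)) :=
  Subring.closure ((Set.range (Lmap (A := A))) ∪ {Tmap θ})

/-- The skew polynomial ring `A[x;θ]` as a type. -/
abbrev Skew (A : Type*) [CommRing A] (θ : A →+* A) : Type _ := SkewPolySubring A θ

/-- The element `x` of `A[x;θ]`. -/
def xSkew (A : Type*) [CommRing A] (θ : A →+* A) : Skew A θ :=
  ⟨Tmap θ, Subring.subset_closure (Set.mem_union_right _ rfl)⟩

/-- The constant `a` as an element of `A[x;θ]`. -/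
def cSkew {A : Type*} [CommRing A] (θ : A →+* A) (a : A) : Skew A θ :=
  ⟨Lmap a, Subring.subset_closure (Set.mem_union_left _ ⟨a, rfl⟩)⟩

/-- The skew polynomial `∑ aᵢ xⁱ ∈ A[x;θ]` attached to coefficient data `p = ∑ aᵢ Xⁱ`. -/
def ofPoly {A : Type*} [CommRing A] (θ : A →+* A) (p : Polynomial A) : Skew A θ :=
  p.sum fun i a => cSkew θ a * xSkew A θ ^ i

/-- The coefficient data of a skew polynomial, recovered by applying the
endomorphism to the polynomial `1`. -/
def toPoly {A : Type*} [CommRing A] {θ : A →+* A} (f : Skew A θ) : Polynomial A :=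
  (f : AddMonoid.End (Polynomial A)) 1

/-- `g |ᵣ p` : `g` is a right divisor of `p` in `A[x;θ]`, i.e. `p = u·g`. -/
def RDvd {A : Type*} [CommRing A] {θ : A →+* A} (g p : Skew A θ) : Prop :=
  ∃ u : Skew A θ, p = u * g

/-- The left ideal `⟨x^n - 1⟩` of `A[x;θ]`. -/
def skewIdeal (A : Type*) [CommRing A] (θ : A →+* A) (n : ℕ) :
    Submodule (Skew A θ) (Skew A θ) :=
  Submodule.span (Skew A θ) {xSkew A θ ^ n - 1}

/-- The quotient left `A[x;θ]`-module `A[x;θ]/⟨x^n-1⟩`. -/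
abbrev SkewQuot (A : Type*) [CommRing A] (θ : A →+* A) (n : ℕ) : Type _ :=
  Skew A θ ⧸ skewIdeal A θ n

/-- The polynomial `c₀ + c₁X + ⋯ + c_{n-1}X^{n-1}` attached to a word `c ∈ Aⁿ`. -/
def wordPoly {A : Type*} [CommRing A] {n : ℕ} (c : Fin n → A) : Polynomial A :=
  ∑ i : Fin n, C (c i) * X ^ (i : ℕ)

/-- Identify the word `c ∈ Aⁿ` with the class of `∑ cᵢ xⁱ` in `A[x;θ]/⟨x^n-1⟩`. -/
def wordToQuot {A : Type*} [CommRing A] (θ : A →+* A) {n : ℕ} (c : Fin n → A) :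
    SkewQuot A θ n :=
  Submodule.Quotient.mk (ofPoly θ (wordPoly c))

/-- A linear code of length `n` over `A`: an `A`-submodule of `Aⁿ`, as a set. -/
def IsLinearCode (A : Type*) [CommRing A] {n : ℕ} (C : Set (Fin n → A)) : Prop :=
  0 ∈ C ∧ (∀ u ∈ C, ∀ v ∈ C, u + v ∈ C) ∧ ∀ γ : A, ∀ u ∈ C, γ • u ∈ C

/-- The `θ`-cyclic shift `(c₀,…,c_{n-1}) ↦ (θ(c_{n-1}),θ(c₀),…,θ(c_{n-2}))`. -/
def skewShift {A : Type*} [CommRing A] (θ : A →+* A) {n : ℕ} [NeZero n]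
    (c : Fin n → A) : Fin n → A :=
  fun i => θ (c (i - 1))

section SkewGeneral
variable {A : Type*} [CommRing A] (θ : A →+* A)

/-- iterated coefficient map -/
def Phi : ℕ → Polynomial A →+* Polynomial A
  | 0 => RingHom.id _
  | n+1 => (Polynomial.mapRingHom θ).comp (Phi n)

lemma Phi_zero (q : Polynomial A) : Phi θ 0 q = q := rfl
lemma Phi_succ (i : ℕ) (q : Polynomial A) : Phi θ (i+1) q = (Phi θ i q).map θ := rfl

lemma Phi_add (i j : ℕ) (q : Polynomial A) : Phi θ (i + j) q = Phi θ i (Phi θ j q) := by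
  induction i with
  | zero => simp [Phi_zero]
  | succ n ih => rw [Nat.succ_add, Phi_succ, Phi_succ, ih]

lemma Phi_comm (i j : ℕ) (q : Polynomial A) : Phi θ i (Phi θ j q) = Phi θ j (Phi θ i q) := by
  rw [← Phi_add, Nat.add_comm, Phi_add]

lemma Phi_X_pow (i k : ℕ) : Phi θ i (X ^ k : Polynomial A) = X ^ k := by
  induction i with
  | zero => rfl
  | succ n ih => rw [Phi_succ, ih]; simp

lemma Phi_monomial (i k : ℕ) (a : A) :
    Phi θ i (monomial k a) = monomial k (θ^[i] a) := by
  induction i with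
  | zero => simp [Phi_zero]
  | succ n ih => rw [Phi_succ, ih, Polynomial.map_monomial, Function.iterate_succ_apply']

lemma Phi_coeff (i : ℕ) (q : Polynomial A) (k : ℕ) :
    (Phi θ i q).coeff k = θ^[i] (q.coeff k) := by
  induction i with
  | zero => simp [Phi_zero]
  | succ n ih => rw [Phi_succ, Polynomial.coeff_map, ih, Function.iterate_succ_apply']

lemma Phi_natDegree_le (i : ℕ) (q : Polynomial A) : (Phi θ i q).natDegree ≤ q.natDegree := by
  induction i with
  | zero => simp [Phi_zero]
  | succ n ih => exact le_trans Polynomial.natDegree_map_le ih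

/-- skew convolution (multiplication of skew polynomials in coefficient form) -/
def skewConv (p q : Polynomial A) : Polynomial A :=
  p.sum fun i a => C a * Phi θ i q * X ^ i

lemma skewConv_monomial (k : ℕ) (a : A) (q : Polynomial A) :
    skewConv θ (monomial k a) q = C a * Phi θ k q * X ^ k := by
  unfold skewConv
  exact Polynomial.sum_monomial_index a _ (by simp)

lemma skewConv_add_left (p p' q : Polynomial A) :
    skewConv θ (p + p') q = skewConv θ p q + skewConv θ p' q := by
  unfold skewConv
  exact Polynomial.sum_add_index p p' _ (by simp) (by intros; rw [C_add]; ring)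

lemma skewConv_zero_left (q : Polynomial A) : skewConv θ 0 q = 0 := by
  unfold skewConv; simp [Polynomial.sum_zero_index]

lemma skewConv_neg_left (p q : Polynomial A) : skewConv θ (-p) q = - skewConv θ p q := by
  have := skewConv_add_left θ p (-p) q
  simp only [add_neg_cancel, skewConv_zero_left] at this
  exact eq_neg_of_add_eq_zero_right this.symm

lemma skewConv_C_left (a : A) (q : Polynomial A) : skewConv θ (C a) q = C a * q := by
  have : (C a : Polynomial A) = monomial 0 a := by simp [C_mul_X_pow_eq_monomial]
  rw [this, skewConv_monomial, Phi_zero, ← this]; ring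

lemma skewConv_X_left (q : Polynomial A) : skewConv θ X q = q.map θ * X := by
  have : (X : Polynomial A) = monomial 1 1 := by simp [← C_mul_X_pow_eq_monomial]
  rw [this, skewConv_monomial, Phi_succ, Phi_zero, C_1, one_mul, pow_one, ← this]

lemma skewConv_one_left (q : Polynomial A) : skewConv θ 1 q = q := by
  have h1 : (1 : Polynomial A) = monomial 0 1 := by simp [C_mul_X_pow_eq_monomial]
  rw [h1, skewConv_monomial, Phi_zero, C_1, one_mul, pow_zero, mul_one]

lemma skewConv_one_right (p : Polynomial A) : skewConv θ p 1 = p := by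
  unfold skewConv
  calc p.sum (fun i a => C a * Phi θ i 1 * X ^ i) = p.sum fun i a => C a * X ^ i := by
        rw [Polynomial.sum_def, Polynomial.sum_def]
        exact Finset.sum_congr rfl fun i _ => by rw [map_one, mul_one]
    _ = p := Polynomial.sum_C_mul_X_pow_eq p

lemma skewConv_add_right (p q q' : Polynomial A) :
    skewConv θ p (q + q') = skewConv θ p q + skewConv θ p q' := by
  unfold skewConv
  rw [← Polynomial.sum_add', Polynomial.sum_def, Polynomial.sum_def]
  exact Finset.sum_congr rfl fun i _ => by simp only [Pi.add_apply, map_add]; ring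

lemma skewConv_zero_right (p : Polynomial A) : skewConv θ p 0 = 0 := by
  unfold skewConv
  rw [Polynomial.sum_def]
  exact Finset.sum_eq_zero fun i _ => by simp

lemma Phi_skewConv (k : ℕ) (q r : Polynomial A) :
    Phi θ k (skewConv θ q r) = skewConv θ (Phi θ k q) (Phi θ k r) := by
  induction q using Polynomial.induction_on' with
  | add p1 p2 ih1 ih2 =>
      rw [skewConv_add_left, map_add, ih1, ih2, map_add, skewConv_add_left]
  | monomial n a =>
      rw [skewConv_monomial, Phi_monomial, skewConv_monomial]
      rw [map_mul, map_mul, Phi_X_pow, Phi_comm]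
      congr 1
      congr 1
      · have : (C a : Polynomial A) = monomial 0 a := by simp [C_mul_X_pow_eq_monomial]
        rw [this, Phi_monomial]
        simp [← C_mul_X_pow_eq_monomial]

lemma skewConv_C_mul_left (a : A) (p r : Polynomial A) :
    skewConv θ (C a * p) r = C a * skewConv θ p r := by
  induction p using Polynomial.induction_on' with
  | add p1 p2 ih1 ih2 =>
      rw [mul_add, skewConv_add_left, ih1, ih2, skewConv_add_left, mul_add]
  | monomial n b =>
      rw [C_mul_monomial, skewConv_monomial, skewConv_monomial, C_mul]; ring

lemma skewConv_mul_X_pow_left (k : ℕ) (p r : Polynomial A) :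
    skewConv θ (p * X ^ k) r = skewConv θ p (Phi θ k r) * X ^ k := by
  induction p using Polynomial.induction_on' with
  | add p1 p2 ih1 ih2 =>
      rw [add_mul, skewConv_add_left, ih1, ih2, skewConv_add_left, add_mul]
  | monomial n b =>
      rw [skewConv_monomial, ← C_mul_X_pow_eq_monomial, mul_assoc, ← pow_add,
        C_mul_X_pow_eq_monomial, skewConv_monomial, Phi_add, pow_add]
      ring

lemma skewConv_assoc (p q r : Polynomial A) :
    skewConv θ p (skewConv θ q r) = skewConv θ (skewConv θ p q) r := by
  induction p using Polynomial.induction_on' with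
  | add p1 p2 ih1 ih2 =>
      rw [skewConv_add_left, ih1, ih2, skewConv_add_left, skewConv_add_left]
  | monomial n a =>
      rw [skewConv_monomial, Phi_skewConv, skewConv_monomial, mul_assoc, mul_assoc,
        skewConv_C_mul_left, skewConv_mul_X_pow_left]

/-- skew convolution as an additive endomorphism in the second argument -/
def skewConvEnd (p : Polynomial A) : AddMonoid.End (Polynomial A) :=
  { toFun := fun q => skewConv θ p q
    map_zero' := skewConv_zero_right θ p
    map_add' := fun q r => skewConv_add_right θ p q r }

lemma skewConvEnd_apply (p q : Polynomial A) : skewConvEnd θ p q = skewConv θ p q := rfl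

end SkewGeneral

section SkewModel
variable {A : Type*} [CommRing A] (θ : A →+* A)

lemma mem_skew_exists (e : AddMonoid.End (Polynomial A)) (he : e ∈ SkewPolySubring A θ) :
    ∃ p : Polynomial A, e = skewConvEnd θ p := by
  induction he using Subring.closure_induction with
  | mem x hx =>
      rcases hx with hx | hx
      · rcases hx with ⟨a, rfl⟩
        refine ⟨C a, AddMonoidHom.ext fun q => ?_⟩
        show C a * q = skewConv θ (C a) q
        rw [skewConv_C_left]
      · rw [Set.mem_singleton_iff] at hx
        subst hx
        refine ⟨X, AddMonoidHom.ext fun q => ?_⟩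
        show q.map θ * X = skewConv θ X q
        rw [skewConv_X_left]
  | zero =>
      refine ⟨0, AddMonoidHom.ext fun q => ?_⟩
      show 0 = skewConv θ 0 q
      rw [skewConv_zero_left]
  | one =>
      refine ⟨1, AddMonoidHom.ext fun q => ?_⟩
      show q = skewConv θ 1 q
      rw [skewConv_one_left]
  | add x y hx hy ihx ihy =>
      obtain ⟨p1, rfl⟩ := ihx; obtain ⟨p2, rfl⟩ := ihy
      refine ⟨p1 + p2, AddMonoidHom.ext fun q => ?_⟩
      show skewConv θ p1 q + skewConv θ p2 q = skewConv θ (p1 + p2) q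
      rw [skewConv_add_left]
  | neg x hx ihx =>
      obtain ⟨p1, rfl⟩ := ihx
      refine ⟨-p1, AddMonoidHom.ext fun q => ?_⟩
      show -(skewConv θ p1 q) = skewConv θ (-p1) q
      rw [skewConv_neg_left]
  | mul x y hx hy ihx ihy =>
      obtain ⟨p1, rfl⟩ := ihx; obtain ⟨p2, rfl⟩ := ihy
      refine ⟨skewConv θ p1 p2, AddMonoidHom.ext fun q => ?_⟩
      show skewConv θ p1 (skewConv θ p2 q) = skewConv θ (skewConv θ p1 p2) q
      rw [skewConv_assoc]

lemma skew_apply (f : Skew A θ) (q : Polynomial A) :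
    (f : AddMonoid.End (Polynomial A)) q = skewConv θ (toPoly f) q := by
  obtain ⟨p, hp⟩ := mem_skew_exists θ f.1 f.2
  have ht : toPoly f = p := by
    show (f : AddMonoid.End (Polynomial A)) 1 = p
    rw [hp, skewConvEnd_apply, skewConv_one_right]
  rw [ht, hp, skewConvEnd_apply]

lemma toPoly_injective : Function.Injective (toPoly (A := A) (θ := θ)) := by
  intro f g hfg
  apply Subtype.ext
  apply AddMonoidHom.ext fun q => ?_
  have h1 := skew_apply θ f q
  have h2 := skew_apply θ g q
  rw [hfg] at h1
  exact h1.trans h2.symm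

variable {θ}

lemma toPoly_add (f g : Skew A θ) : toPoly (f + g) = toPoly f + toPoly g := rfl

lemma toPoly_sub (f g : Skew A θ) : toPoly (f - g) = toPoly f - toPoly g := rfl

lemma toPoly_one : toPoly (1 : Skew A θ) = 1 := rfl

lemma toPoly_zero : toPoly (0 : Skew A θ) = 0 := rfl

lemma toPoly_mul (f g : Skew A θ) : toPoly (f * g) = skewConv θ (toPoly f) (toPoly g) := by
  exact skew_apply θ f (toPoly g)

lemma toPoly_cSkew (a : A) : toPoly (cSkew θ a) = C a := by
  show C a * 1 = C a
  rw [mul_one]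

lemma toPoly_xSkew_pow (k : ℕ) : toPoly (xSkew A θ ^ k) = (X : Polynomial A) ^ k := by
  induction k with
  | zero => exact toPoly_one
  | succ n ih =>
      rw [pow_succ', toPoly_mul, ih]
      show skewConv θ (toPoly (xSkew A θ)) _ = _
      have hx : toPoly (xSkew A θ) = (X : Polynomial A) := by
        show (1 : Polynomial A).map θ * X = X
        rw [Polynomial.map_one, one_mul]
      rw [hx, skewConv_X_left]
      rw [← Polynomial.coe_mapRingHom, map_pow, Polynomial.coe_mapRingHom, Polynomial.map_X,
        ← pow_succ]

lemma toPoly_ofPoly (p : Polynomial A) : toPoly (ofPoly θ p) = p := by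
  unfold ofPoly
  rw [Polynomial.sum_def]
  have : toPoly (∑ i ∈ p.support, cSkew θ (p.coeff i) * xSkew A θ ^ i)
      = ∑ i ∈ p.support, toPoly (cSkew θ (p.coeff i) * xSkew A θ ^ i) := by
    induction p.support using Finset.induction_on with
    | empty => simp [toPoly_zero]
    | insert a s' hnot ih => rw [Finset.sum_insert hnot, Finset.sum_insert hnot, toPoly_add, ih]
  rw [this]
  have : ∀ i ∈ p.support, toPoly (cSkew θ (p.coeff i) * xSkew A θ ^ i) = C (p.coeff i) * X ^ i := by
    intro i _
    rw [toPoly_mul, toPoly_cSkew, toPoly_xSkew_pow, skewConv_C_left]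
  rw [Finset.sum_congr rfl this]
  conv_rhs => rw [← Polynomial.sum_C_mul_X_pow_eq p]
  rw [Polynomial.sum_def]

lemma ofPoly_toPoly (f : Skew A θ) : ofPoly θ (toPoly f) = f :=
  toPoly_injective θ (toPoly_ofPoly (toPoly f))

lemma ofPoly_mul (p q : Polynomial A) :
    ofPoly θ (skewConv θ p q) = ofPoly θ p * ofPoly θ q := by
  apply toPoly_injective θ
  rw [toPoly_ofPoly, toPoly_mul, toPoly_ofPoly, toPoly_ofPoly]

lemma ofPoly_add (p q : Polynomial A) : ofPoly θ (p + q) = ofPoly θ p + ofPoly θ q := by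
  apply toPoly_injective θ
  rw [toPoly_ofPoly, toPoly_add, toPoly_ofPoly, toPoly_ofPoly]

lemma ofPoly_sub (p q : Polynomial A) : ofPoly θ (p - q) = ofPoly θ p - ofPoly θ q := by
  apply toPoly_injective θ
  rw [toPoly_ofPoly, toPoly_sub, toPoly_ofPoly, toPoly_ofPoly]

lemma ofPoly_zero : ofPoly θ (0 : Polynomial A) = 0 := by
  apply toPoly_injective θ
  rw [toPoly_ofPoly, toPoly_zero]

lemma ofPoly_one : ofPoly θ (1 : Polynomial A) = 1 := by
  apply toPoly_injective θ
  rw [toPoly_ofPoly, toPoly_one]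

lemma ofPoly_X_pow (k : ℕ) : ofPoly θ ((X : Polynomial A) ^ k) = xSkew A θ ^ k := by
  apply toPoly_injective θ
  rw [toPoly_ofPoly, toPoly_xSkew_pow]

lemma ofPoly_C (a : A) : ofPoly θ (C a) = cSkew θ a := by
  apply toPoly_injective θ
  rw [toPoly_ofPoly, toPoly_cSkew]

lemma ofPoly_neg (p : Polynomial A) : ofPoly θ (-p) = - ofPoly θ p := by
  apply toPoly_injective θ
  rw [toPoly_ofPoly]
  show -p = - toPoly (ofPoly θ p)
  rw [toPoly_ofPoly]

lemma ofPoly_C_mul (a : A) (p : Polynomial A) :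
    ofPoly θ (C a * p) = cSkew θ a * ofPoly θ p := by
  rw [← ofPoly_C (θ := θ) a, ← ofPoly_mul, skewConv_C_left]

end SkewModel


section SkewDiv
set_option linter.unusedSectionVars false
variable {A : Type*} [CommRing A] [Nontrivial A] (θ : A →+* A)

lemma theta_iterate_one (i : ℕ) : θ^[i] (1 : A) = 1 := by
  induction i with
  | zero => rfl
  | succ n ih => rw [Function.iterate_succ_apply', ih, map_one]

lemma Phi_coeff_natDegree {M : Polynomial A} (hM : M.Monic) (i : ℕ) :
    (Phi θ i M).coeff M.natDegree = 1 := by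
  rw [Phi_coeff, Polynomial.coeff_natDegree, hM.leadingCoeff, theta_iterate_one]

lemma Phi_natDegree {M : Polynomial A} (hM : M.Monic) (i : ℕ) :
    (Phi θ i M).natDegree = M.natDegree := by
  refine le_antisymm (Phi_natDegree_le θ i M) ?_
  apply Polynomial.le_natDegree_of_ne_zero
  rw [Phi_coeff_natDegree θ hM]
  exact one_ne_zero

lemma Phi_monic {M : Polynomial A} (hM : M.Monic) (i : ℕ) : (Phi θ i M).Monic := by
  unfold Polynomial.Monic
  rw [← Polynomial.coeff_natDegree, Phi_natDegree θ hM, Phi_coeff_natDegree θ hM]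

lemma skewConv_coeff_top (u : Polynomial A) {M : Polynomial A} (hM : M.Monic) :
    (skewConv θ u M).coeff (u.natDegree + M.natDegree) = u.leadingCoeff := by
  by_cases hu : u = 0
  · subst hu; rw [skewConv_zero_left]; simp
  rw [skewConv, Polynomial.sum_def, Polynomial.finset_sum_coeff]
  have hterm : ∀ i ∈ u.support, i ≠ u.natDegree →
      (C (u.coeff i) * Phi θ i M * X ^ i).coeff (u.natDegree + M.natDegree) = 0 := by
    intro i hi hne
    have hile : i ≤ u.natDegree :=
      Polynomial.le_natDegree_of_ne_zero (Polynomial.mem_support_iff.mp hi)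
    rw [Polynomial.coeff_mul_X_pow', if_pos (by omega), Polynomial.coeff_C_mul]
    have hlt : (Phi θ i M).natDegree < u.natDegree + M.natDegree - i := by
      have := Phi_natDegree_le θ i M
      omega
    rw [Polynomial.coeff_eq_zero_of_natDegree_lt hlt, mul_zero]
  have hmem : u.natDegree ∈ u.support := by
    rw [Polynomial.mem_support_iff, Polynomial.coeff_natDegree]
    exact Polynomial.leadingCoeff_ne_zero.mpr hu
  rw [Finset.sum_eq_single_of_mem _ hmem hterm, Polynomial.coeff_mul_X_pow',
    if_pos (by omega), Polynomial.coeff_C_mul]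
  have : u.natDegree + M.natDegree - u.natDegree = M.natDegree := by omega
  rw [this, Phi_coeff_natDegree θ hM, mul_one, Polynomial.coeff_natDegree]

lemma skewConv_eq_zero_of_degree_lt {u M : Polynomial A} (hM : M.Monic)
    (hdeg : (skewConv θ u M).degree < M.degree) : u = 0 := by
  by_contra hu
  have h1 : ((u.natDegree + M.natDegree : ℕ) : WithBot ℕ) ≤ (skewConv θ u M).degree := by
    apply Polynomial.le_degree_of_ne_zero
    rw [skewConv_coeff_top θ u hM]
    exact Polynomial.leadingCoeff_ne_zero.mpr hu
  have h2 : M.degree = (M.natDegree : WithBot ℕ) := Polynomial.degree_eq_natDegree hM.ne_zero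
  rw [h2] at hdeg
  have h3 : ((M.natDegree : ℕ) : WithBot ℕ) ≤ ((u.natDegree + M.natDegree : ℕ) : WithBot ℕ) := by
    exact_mod_cast Nat.le_add_left _ _
  exact absurd (lt_of_le_of_lt (h3.trans h1) hdeg) (lt_irrefl _)

theorem skewDiv_aux {M : Polynomial A} (hM : M.Monic) :
    ∀ n : ℕ, ∀ p : Polynomial A, p.natDegree ≤ n →
      ∃ u r, p = skewConv θ u M + r ∧ r.degree < M.degree := by
  intro n
  induction n using Nat.strong_induction_on with
  | _ n ih =>
  intro p hpn
  by_cases hlt : p.degree < M.degree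
  · exact ⟨0, p, by rw [skewConv_zero_left, zero_add], hlt⟩
  push_neg at hlt
  have hp0 : p ≠ 0 := by
    rintro rfl
    rw [Polynomial.degree_zero, le_bot_iff] at hlt
    exact hM.ne_zero (Polynomial.degree_eq_bot.mp hlt)
  have hnd : M.natDegree ≤ p.natDegree := Polynomial.natDegree_le_natDegree hlt
  set k := p.natDegree - M.natDegree with hk
  set c := p.leadingCoeff with hc
  set q1 := C c * (Phi θ k M * X ^ k) with hq1
  have hq1conv : skewConv θ (C c * X ^ k) M = q1 := by
    rw [C_mul_X_pow_eq_monomial, skewConv_monomial, hq1, mul_assoc]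
  have hmon2 : (Phi θ k M * X ^ k).Monic := (Phi_monic θ hM k).mul (Polynomial.monic_X_pow k)
  have hdeg2 : (Phi θ k M * X ^ k).degree = (p.natDegree : WithBot ℕ) := by
    rw [(Polynomial.monic_X_pow k).degree_mul, Polynomial.degree_X_pow,
      Polynomial.degree_eq_natDegree (Phi_monic θ hM k).ne_zero, Phi_natDegree θ hM]
    have : M.natDegree + k = p.natDegree := by omega
    exact_mod_cast congrArg (Nat.cast : ℕ → WithBot ℕ) this
  have hc0 : c ≠ 0 := Polynomial.leadingCoeff_ne_zero.mpr hp0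
  have hq1deg : q1.degree = p.degree := by
    rw [hq1, hmon2.degree_mul, hdeg2, Polynomial.degree_C hc0,
      Polynomial.degree_eq_natDegree hp0, zero_add]
  have hq1lead : q1.leadingCoeff = c := by
    have hq1ne : q1 ≠ 0 := fun hz => by
      rw [hz, Polynomial.degree_zero] at hq1deg
      exact hp0 (Polynomial.degree_eq_bot.mp hq1deg.symm)
    have hnd1 : q1.natDegree = p.natDegree := by
      have := hq1deg
      rwa [Polynomial.degree_eq_natDegree hq1ne, Polynomial.degree_eq_natDegree hp0,
        Nat.cast_inj] at this
    rw [Polynomial.leadingCoeff, hnd1, hq1, ← mul_assoc,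
      Polynomial.coeff_mul_X_pow', if_pos (by omega), Polynomial.coeff_C_mul]
    have : p.natDegree - k = M.natDegree := by omega
    rw [this, Phi_coeff_natDegree θ hM, mul_one]
  have hsub : (p - q1).degree < p.degree :=
    Polynomial.degree_sub_lt hq1deg.symm hp0 (by rw [← hc, hq1lead])
  by_cases hz : p - q1 = 0
  · refine ⟨C c * X ^ k, 0, ?_, ?_⟩
    · rw [hq1conv, add_zero]
      rwa [sub_eq_zero] at hz
    · rw [Polynomial.degree_zero]
      exact bot_lt_iff_ne_bot.mpr fun hb => hM.ne_zero (Polynomial.degree_eq_bot.mp hb)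
  · have hlt' : (p - q1).natDegree < n :=
      lt_of_lt_of_le (Polynomial.natDegree_lt_natDegree hz hsub) hpn
    obtain ⟨u, r, heq, hr⟩ := ih _ hlt' (p - q1) le_rfl
    refine ⟨C c * X ^ k + u, r, ?_, hr⟩
    rw [skewConv_add_left, hq1conv]
    have hps : p = q1 + (p - q1) := by ring
    rw [hps, heq]
    ring

end SkewDiv


section SkewWord
variable {A : Type*} [CommRing A] {n : ℕ}

lemma wordPoly_coeff (c : Fin n → A) (k : ℕ) :
    (wordPoly c).coeff k = if hk : k < n then c ⟨k, hk⟩ else 0 := by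
  unfold wordPoly
  rw [Polynomial.finset_sum_coeff]
  simp only [Polynomial.coeff_C_mul, Polynomial.coeff_X_pow]
  by_cases hk : k < n
  · rw [dif_pos hk, Finset.sum_eq_single (⟨k, hk⟩ : Fin n)]
    · simp
    · intro b _ hb
      rw [if_neg, mul_zero]
      intro hbk
      exact hb (Fin.ext (by simp only [Fin.val_mk]; omega))
    · simp
  · rw [dif_neg hk]
    apply Finset.sum_eq_zero
    intro i _
    rw [if_neg, mul_zero]
    omega

lemma wordPoly_degree_lt [NeZero n] (c : Fin n → A) :
    (wordPoly c).degree < (n : WithBot ℕ) := by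
  rw [Polynomial.degree_lt_iff_coeff_zero]
  intro k hk
  rw [wordPoly_coeff, dif_neg (by omega)]

lemma wordPoly_of_degree_lt (r : Polynomial A) (hr : r.degree < (n : WithBot ℕ)) :
    wordPoly (fun i : Fin n => r.coeff i) = r := by
  ext k
  rw [wordPoly_coeff]
  by_cases hk : k < n
  · rw [dif_pos hk]
  · rw [dif_neg hk]
    exact ((Polynomial.degree_lt_iff_coeff_zero r n).mp hr k (by omega)).symm

lemma wordPoly_add (u v : Fin n → A) : wordPoly (u + v) = wordPoly u + wordPoly v := by
  unfold wordPoly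
  rw [← Finset.sum_add_distrib]
  exact Finset.sum_congr rfl fun i _ => by rw [Pi.add_apply, C_add]; ring

lemma wordPoly_smul (γ : A) (u : Fin n → A) : wordPoly (γ • u) = C γ * wordPoly u := by
  unfold wordPoly
  rw [Finset.mul_sum]
  exact Finset.sum_congr rfl fun i _ => by rw [Pi.smul_apply, smul_eq_mul, C_mul]; ring

lemma wordPoly_zero : wordPoly (0 : Fin n → A) = 0 := by
  unfold wordPoly
  apply Finset.sum_eq_zero
  intro i _
  simp

lemma wordPoly_eq_iff (u v : Fin n → A) : wordPoly u = wordPoly v ↔ u = v := by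
  constructor
  · intro huv
    funext i
    have := congrArg (fun p => Polynomial.coeff p (i : ℕ)) huv
    simpa [wordPoly_coeff, i.isLt] using this
  · rintro rfl; rfl

end SkewWord

section SkewShiftLemma
variable {A : Type*} [CommRing A] (θ : A →+* A) {n' : ℕ}

lemma wordPoly_skewShift (c : Fin (n' + 1) → A) :
    wordPoly (skewShift θ c) =
      skewConv θ X (wordPoly c) - C (θ (c (Fin.last n'))) * (X ^ (n' + 1) - 1) := by
  rw [skewConv_X_left]
  have hmap : (wordPoly c).map θ * X
      = ∑ i : Fin (n' + 1), C (θ (c i)) * X ^ ((i : ℕ) + 1) := by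
    unfold wordPoly
    rw [← Polynomial.coe_mapRingHom, map_sum, Finset.sum_mul]
    exact Finset.sum_congr rfl fun i _ => by
      rw [Polynomial.coe_mapRingHom, Polynomial.map_mul, Polynomial.map_C,
        Polynomial.map_pow, Polynomial.map_X, pow_succ, mul_assoc]
  have hre : wordPoly (skewShift θ c)
      = ∑ j : Fin (n' + 1), C (θ (c j)) * X ^ (((j + 1 : Fin (n' + 1))) : ℕ) := by
    unfold wordPoly skewShift
    apply Fintype.sum_equiv (Equiv.subRight (1 : Fin (n' + 1)))
    intro j
    rw [Equiv.subRight_apply, sub_add_cancel]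
  rw [hre, hmap]
  have key : ∑ j : Fin (n' + 1), C (θ (c j)) * X ^ (((j + 1 : Fin (n' + 1))) : ℕ)
      - ∑ i : Fin (n' + 1), C (θ (c i)) * X ^ ((i : ℕ) + 1)
      = - (C (θ (c (Fin.last n'))) * (X ^ (n' + 1) - 1)) := by
    rw [← Finset.sum_sub_distrib, Finset.sum_eq_single (Fin.last n')]
    · rw [Fin.last_add_one]
      simp only [Fin.val_zero, pow_zero, Fin.val_last, mul_one]
      ring
    · intro b _ hb
      rw [Fin.val_add_one, if_neg hb, sub_self]
    · simp
  linear_combination key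

end SkewShiftLemma

section SkewMapTransfer
variable {A B : Type*} [CommRing A] [CommRing B] (φ : A →+* B)
  (θA : A →+* A) (θB : B →+* B)

lemma Phi_map (hcomm : ∀ a, φ (θA a) = θB (φ a)) (i : ℕ) (q : Polynomial A) :
    (Phi θA i q).map φ = Phi θB i (q.map φ) := by
  induction i with
  | zero => rfl
  | succ k ih =>
      rw [Phi_succ, Phi_succ, ← ih, Polynomial.map_map, Polynomial.map_map]
      congr 1
      exact RingHom.ext fun a => hcomm a

lemma skewConv_map (hcomm : ∀ a, φ (θA a) = θB (φ a)) (p q : Polynomial A) :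
    (skewConv θA p q).map φ = skewConv θB (p.map φ) (q.map φ) := by
  induction p using Polynomial.induction_on' with
  | add p1 p2 ih1 ih2 =>
      rw [skewConv_add_left, Polynomial.map_add, ih1, ih2, Polynomial.map_add,
        skewConv_add_left]
  | monomial k a =>
      rw [skewConv_monomial, Polynomial.map_monomial, skewConv_monomial,
        Polynomial.map_mul, Polynomial.map_mul, Polynomial.map_C, Polynomial.map_pow,
        Polynomial.map_X, Phi_map φ θA θB hcomm _]

end SkewMapTransfer

section SkewCode
set_option linter.unusedSectionVars false
variable {A : Type*} [CommRing A] (θ : A →+* A) {n : ℕ} [NeZero n]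

lemma wordToQuot_add (u v : Fin n → A) :
    wordToQuot θ (u + v) = wordToQuot θ u + wordToQuot θ v := by
  unfold wordToQuot
  rw [wordPoly_add, ofPoly_add, Submodule.Quotient.mk_add]

lemma wordToQuot_zero : wordToQuot θ (0 : Fin n → A) = 0 := by
  unfold wordToQuot
  rw [wordPoly_zero, ofPoly_zero, Submodule.Quotient.mk_zero]

lemma wordToQuot_smul (γ : A) (u : Fin n → A) :
    wordToQuot θ (γ • u) = cSkew θ γ • wordToQuot θ u := by
  unfold wordToQuot
  rw [wordPoly_smul, ofPoly_C_mul, ← smul_eq_mul, Submodule.Quotient.mk_smul]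

lemma wordToQuot_neg (u : Fin n → A) : wordToQuot θ (-u) = - wordToQuot θ u := by
  have h1 : -u = (-1 : A) • u := by funext i; simp
  rw [h1, wordToQuot_smul]
  have h2 : cSkew θ (-1 : A) = -1 := by
    apply toPoly_injective θ
    rw [toPoly_cSkew]
    show C (-1 : A) = toPoly (-(1 : Skew A θ))
    rw [show toPoly (-(1:Skew A θ)) = - toPoly (1 : Skew A θ) from rfl, toPoly_one, map_neg, C_1]
  rw [h2, neg_smul, one_smul]

lemma wordToQuot_xSkew_smul (c : Fin n → A) :
    xSkew A θ • wordToQuot θ c = wordToQuot θ (skewShift θ c) := by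
  obtain ⟨n', rfl⟩ : ∃ n', n = n' + 1 := by
    rcases Nat.exists_eq_succ_of_ne_zero (NeZero.ne n) with ⟨n', hn⟩
    exact ⟨n', hn⟩
  unfold wordToQuot
  rw [← Submodule.Quotient.mk_smul, smul_eq_mul]
  rw [show xSkew A θ = ofPoly θ (X : Polynomial A) by
      rw [← pow_one (X : Polynomial A), ofPoly_X_pow, pow_one]]
  rw [← ofPoly_mul]
  symm
  rw [Submodule.Quotient.eq]
  have hdiff : ofPoly θ (wordPoly (skewShift θ c)) - ofPoly θ (skewConv θ X (wordPoly c))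
      = -(cSkew θ (θ (c (Fin.last n'))) * (xSkew A θ ^ (n' + 1) - 1)) := by
    rw [← ofPoly_sub, wordPoly_skewShift θ c]
    have hring : skewConv θ X (wordPoly c) - C (θ (c (Fin.last n'))) * (X ^ (n' + 1) - 1)
        - skewConv θ X (wordPoly c)
        = -(C (θ (c (Fin.last n'))) * (X ^ (n' + 1) - 1)) := by ring
    rw [hring, ofPoly_neg, ofPoly_C_mul, ofPoly_sub, ofPoly_X_pow, ofPoly_one]
  rw [hdiff]
  exact Submodule.neg_mem _ (Submodule.smul_mem _ _ (Submodule.mem_span_singleton_self _))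

lemma image_code_submodule (Cset : Set (Fin n → A)) (hlin : IsLinearCode A Cset)
    (hcyc : ∀ c ∈ Cset, skewShift θ c ∈ Cset) :
    ∃ W : Submodule (Skew A θ) (SkewQuot A θ n),
      (W : Set (SkewQuot A θ n)) = wordToQuot θ '' Cset := by
  have hadd : ∀ y1 ∈ wordToQuot θ '' Cset, ∀ y2 ∈ wordToQuot θ '' Cset,
      y1 + y2 ∈ wordToQuot θ '' Cset := by
    rintro _ ⟨u, hu, rfl⟩ _ ⟨v, hv, rfl⟩
    exact ⟨u + v, hlin.2.1 u hu v hv, wordToQuot_add θ u v⟩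
  have hzero : (0 : SkewQuot A θ n) ∈ wordToQuot θ '' Cset :=
    ⟨0, hlin.1, wordToQuot_zero θ⟩
  have hneg : ∀ y ∈ wordToQuot θ '' Cset, -y ∈ wordToQuot θ '' Cset := by
    rintro _ ⟨u, hu, rfl⟩
    have hmem : -u ∈ Cset := by
      have huu : -u = (-1 : A) • u := by funext i; simp
      rw [huu]
      exact hlin.2.2 (-1) u hu
    exact ⟨-u, hmem, wordToQuot_neg θ u⟩
  have hsmul : ∀ (f : Skew A θ), ∀ y ∈ wordToQuot θ '' Cset,
      f • y ∈ wordToQuot θ '' Cset := by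
    rintro ⟨e, he⟩
    induction he using Subring.closure_induction with
    | mem x hx =>
        rcases hx with ⟨a, rfl⟩ | hx
        · rintro _ ⟨u, hu, rfl⟩
          have hca : (⟨Lmap a, Subring.subset_closure (Set.mem_union_left _ ⟨a, rfl⟩)⟩ :
              Skew A θ) = cSkew θ a := rfl
          rw [hca, ← wordToQuot_smul]
          exact ⟨a • u, hlin.2.2 a u hu, rfl⟩
        · rw [Set.mem_singleton_iff] at hx
          subst hx
          rintro _ ⟨u, hu, rfl⟩
          have hxx : (⟨Tmap θ, Subring.subset_closure (Set.mem_union_right _ rfl)⟩ :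
              Skew A θ) = xSkew A θ := rfl
          rw [hxx, wordToQuot_xSkew_smul]
          exact ⟨_, hcyc u hu, rfl⟩
    | zero =>
        intro y hy
        rw [show (⟨(0 : AddMonoid.End (Polynomial A)), zero_mem _⟩ : Skew A θ) = 0 from rfl,
          zero_smul]
        exact hzero
    | one =>
        intro y hy
        rw [show (⟨(1 : AddMonoid.End (Polynomial A)), one_mem _⟩ : Skew A θ) = 1 from rfl,
          one_smul]
        exact hy
    | add x y hx hy ihx ihy =>
        intro z hz
        rw [show (⟨x + y, add_mem hx hy⟩ : Skew A θ) = ⟨x, hx⟩ + ⟨y, hy⟩ from rfl, add_smul]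
        exact hadd _ (ihx z hz) _ (ihy z hz)
    | neg x hx ihx =>
        intro z hz
        rw [show (⟨-x, neg_mem hx⟩ : Skew A θ) = -⟨x, hx⟩ from rfl, neg_smul]
        exact hneg _ (ihx z hz)
    | mul x y hx hy ihx ihy =>
        intro z hz
        rw [show (⟨x * y, mul_mem hx hy⟩ : Skew A θ) = (⟨x, hx⟩ : Skew A θ) * ⟨y, hy⟩ from rfl,
          mul_smul]
        exact ihx _ (ihy z hz)
  exact ⟨{ carrier := wordToQuot θ '' Cset
           add_mem' := fun ha hb => hadd _ ha _ hb
           zero_mem' := hzero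
           smul_mem' := fun f y hy => hsmul f y hy }, rfl⟩

end SkewCode


section CoeffMap
variable {A B : Type*} [CommRing A] [CommRing B]

lemma coeff_sum_map (p : Polynomial A) (F : A → B) (hF : F 0 = 0) (k : ℕ) :
    (p.sum fun i a => C (F a) * X ^ i).coeff k = F (p.coeff k) := by
  rw [Polynomial.sum_def, Polynomial.finset_sum_coeff]
  simp only [Polynomial.coeff_C_mul, Polynomial.coeff_X_pow]
  by_cases hk : k ∈ p.support
  · rw [Finset.sum_eq_single_of_mem k hk]
    · rw [if_pos rfl, mul_one]
    · intro b _ hb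
      rw [if_neg (Ne.symm hb), mul_zero]
  · have h0 : p.coeff k = 0 := Polynomial.notMem_support_iff.mp hk
    rw [h0, hF]
    apply Finset.sum_eq_zero
    intro i hi
    rw [if_neg (fun hh : k = i => hk (by rw [hh]; exact hi)), mul_zero]

end CoeffMap

section R4R2
variable (h : Z4[X])

lemma mk_h_eq_zero : Ideal.Quotient.mk (Ideal.span {h}) h = 0 :=
  Ideal.Quotient.eq_zero_iff_mem.mpr (Ideal.subset_span rfl)

lemma mk_hbar_eq_zero : Ideal.Quotient.mk (Ideal.span {h.map bar}) (h.map bar) = 0 :=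
  Ideal.Quotient.eq_zero_iff_mem.mpr (Ideal.subset_span rfl)

lemma mk_rep4 (hmon : h.Monic) (α : R4 h) :
    Ideal.Quotient.mk (Ideal.span {h}) (rep4 h α) = α := by
  unfold rep4
  rw [Polynomial.modByMonic_eq_sub_mul_div _ h, map_sub, map_mul, mk_h_eq_zero,
    zero_mul, sub_zero]
  exact Quotient.out_eq α

lemma mk_rep2 (hmon : h.Monic) (α : R2 h) :
    Ideal.Quotient.mk (Ideal.span {h.map bar}) (rep2 h α) = α := by
  unfold rep2
  rw [Polynomial.modByMonic_eq_sub_mul_div _ (h.map bar), map_sub, map_mul,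
    mk_hbar_eq_zero, zero_mul, sub_zero]
  exact Quotient.out_eq α

lemma bar_val : ∀ a : Z2, bar ((a.val : Z4)) = a := by decide

lemma barR_mk (p : Z4[X]) :
    barR h (Ideal.Quotient.mk (Ideal.span {h}) p)
      = Ideal.Quotient.mk (Ideal.span {h.map bar}) (p.map bar) :=
  Ideal.quotientMap_mk

lemma barR_iota (hmon : h.Monic) (α : R2 h) : barR h (iota h α) = α := by
  unfold iota
  rw [barR_mk]
  have : ((rep2 h α).sum fun i a => C ((a.val : Z4)) * X ^ i).map bar = rep2 h α := by
    ext k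
    rw [Polynomial.coeff_map,
      coeff_sum_map (rep2 h α) (fun a : Z2 => ((a.val : Z4))) (by decide) k, bar_val]
  rw [this, mk_rep2 h hmon]

lemma two_R2_eq_zero : (2 : R2 h) = 0 := by
  have h2 : (2 : R2 h) = Ideal.Quotient.mk (Ideal.span {h.map bar}) (2 : Z2[X]) :=
    (map_ofNat _ 2).symm
  have h0 : (2 : Z2[X]) = 0 := by
    have : (2 : Z2[X]) = C (2 : Z2) := by
      rw [← map_ofNat (C : Z2 →+* Z2[X]) 2]
    rw [this, show (2 : Z2) = 0 by decide, map_zero]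
  rw [h2, h0, map_zero]

lemma two_R2X_eq_zero : (2 : Polynomial (R2 h)) = 0 := by
  have : (2 : Polynomial (R2 h)) = C (2 : R2 h) := by
    rw [← map_ofNat (C : R2 h →+* Polynomial (R2 h)) 2]
  rw [this, two_R2_eq_zero, map_zero]

lemma ker_barR (hmon : h.Monic) (γ : R4 h) (hγ : barR h γ = 0) : ∃ β : R4 h, γ = 2 * β := by
  obtain ⟨p, rfl⟩ : ∃ p, Ideal.Quotient.mk (Ideal.span {h}) p = γ :=
    ⟨Quotient.out γ, Quotient.out_eq γ⟩
  rw [barR_mk] at hγ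
  have hmem : p.map bar ∈ Ideal.span {h.map bar} := Ideal.Quotient.eq_zero_iff_mem.mp hγ
  obtain ⟨t', ht'⟩ := Ideal.mem_span_singleton'.mp hmem
  obtain ⟨t, rfl⟩ := Polynomial.map_surjective bar
    (fun b => ⟨((b.val : Z4)), bar_val b⟩) t'
  have hker : (p - t * h).map bar = 0 := by
    rw [Polynomial.map_sub, Polynomial.map_mul, ht']
    ring
  set halfF : Z4 → Z4 := fun a => if a = 2 then 1 else 0 with hhalf
  have hhalfspec : ∀ a : Z4, bar a = 0 → 2 * halfF a = a := by decide
  set d : Z4[X] := (p - t * h).sum fun i a => C (halfF a) * X ^ i with hd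
  have hpd : p - t * h = 2 * d := by
    ext k
    have hco : d.coeff k = halfF ((p - t * h).coeff k) :=
      coeff_sum_map (p - t * h) halfF (by rw [hhalf]; exact if_neg (by decide)) k
    have hbk : bar ((p - t * h).coeff k) = 0 := by
      rw [← Polynomial.coeff_map, hker, Polynomial.coeff_zero]
    have h2d : (2 * d).coeff k = 2 * d.coeff k := by
      rw [two_mul, Polynomial.coeff_add, ← two_mul]
    rw [h2d, hco, hhalfspec _ hbk]
  refine ⟨Ideal.Quotient.mk _ d, ?_⟩
  have hp2 : p = t * h + 2 * d := by rw [← hpd]; ring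
  rw [hp2, map_add, map_mul, mk_h_eq_zero, mul_zero, zero_add, map_mul, map_ofNat]

end R4R2


section Theta
variable (h : Z4[X])

lemma barR_xi : barR h (xi h) = xibar h := by
  unfold xi xibar
  rw [barR_mk, Polynomial.map_X]

lemma frob_R2 (b : R2 h) (P : Z2[X]) :
    Polynomial.aeval (b ^ 2) P = (Polynomial.aeval b P) ^ 2 := by
  induction P using Polynomial.induction_on' with
  | add p q ihp ihq =>
      rw [map_add, ihp, ihq, map_add, add_sq, two_R2_eq_zero]
      ring
  | monomial n a =>
      rw [Polynomial.aeval_monomial, Polynomial.aeval_monomial, mul_pow, ← map_pow,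
        (by decide : ∀ x : Z2, x ^ 2 = x) a, ← pow_mul, ← pow_mul, Nat.mul_comm]

lemma aeval_xibar (q : Z2[X]) :
    Polynomial.aeval (xibar h) q = Ideal.Quotient.mk (Ideal.span {h.map bar}) q := by
  have hx : xibar h = (Ideal.Quotient.mkₐ Z2 (Ideal.span {h.map bar})) X := rfl
  rw [hx, Polynomial.aeval_algHom_apply, Polynomial.aeval_X_left_apply]
  rfl

lemma hbar_root_sq : Polynomial.aeval ((xibar h) ^ 2) (h.map bar) = 0 := by
  rw [frob_R2, aeval_xibar, mk_hbar_eq_zero, zero_pow]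
  exact two_ne_zero

lemma theta_comm (hmon : h.Monic)
    (θ4 : R4 h →+* R4 h) (hθ4 : ⇑θ4 = thetaFun4 h)
    (θ2 : R2 h →+* R2 h) (hθ2 : ⇑θ2 = thetaFun2 h) (α : R4 h) :
    barR h (θ4 α) = θ2 (barR h α) := by
  rw [show θ4 α = thetaFun4 h α from congrFun hθ4 α,
    show θ2 (barR h α) = thetaFun2 h (barR h α) from congrFun hθ2 _]
  unfold thetaFun4 thetaFun2
  have h1 : barR h (Polynomial.aeval (xi h ^ 2) (rep4 h α))
      = Polynomial.eval₂ ((barR h).comp (algebraMap Z4 (R4 h))) ((xibar h) ^ 2)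
        (rep4 h α) := by
    rw [Polynomial.aeval_def, Polynomial.hom_eval₂, map_pow, barR_xi]
  have h2 : Polynomial.eval₂ ((barR h).comp (algebraMap Z4 (R4 h))) ((xibar h) ^ 2)
        (rep4 h α)
      = Polynomial.aeval ((xibar h) ^ 2) ((rep4 h α).map bar) := by
    rw [Polynomial.aeval_def, Polynomial.eval₂_map]
    congr 1
    exact RingHom.ext_zmod _ _
  rw [h1, h2]
  have hmk : Ideal.Quotient.mk (Ideal.span {h.map bar}) ((rep4 h α).map bar)
      = Ideal.Quotient.mk (Ideal.span {h.map bar}) (rep2 h (barR h α)) := by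
    rw [mk_rep2 h hmon, ← barR_mk, mk_rep4 h hmon]
  have hmem : (rep4 h α).map bar - rep2 h (barR h α) ∈ Ideal.span {h.map bar} :=
    (Ideal.Quotient.mk_eq_mk_iff_sub_mem _ _).mp hmk
  obtain ⟨t, ht⟩ := Ideal.mem_span_singleton'.mp hmem
  have hsplit : (rep4 h α).map bar = rep2 h (barR h α) + t * (h.map bar) := by
    rw [ht]; ring
  rw [hsplit, map_add, map_mul, hbar_root_sq, mul_zero, add_zero]

lemma nontrivial_R4 (hirr : Irreducible (h.map bar)) : Nontrivial (R4 h) := by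
  apply Ideal.Quotient.nontrivial_iff.mpr
  rw [Ne, Ideal.eq_top_iff_one, Ideal.mem_span_singleton]
  intro hdvd
  have hd2 : (h.map bar) ∣ 1 := by
    have hmd := Polynomial.map_dvd (bar : Z4 →+* Z2) hdvd
    rwa [Polynomial.map_one] at hmd
  exact hirr.not_isUnit (isUnit_of_dvd_one hd2)

lemma rep2_zero (hmon : h.Monic) : rep2 h 0 = 0 := by
  unfold rep2
  rw [(Polynomial.modByMonic_eq_zero_iff_dvd (hmon.map bar)).mpr]
  exact Ideal.mem_span_singleton.mp
    (Ideal.Quotient.eq_zero_iff_mem.mp (Quotient.out_eq (0 : R2 h)))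

lemma iota_zero (hmon : h.Monic) : iota h 0 = 0 := by
  unfold iota
  rw [rep2_zero h hmon, Polynomial.sum_zero_index, map_zero]

lemma rep2_one (hmon : h.Monic) (hdeg : 1 ≤ h.natDegree) : rep2 h 1 = 1 := by
  unfold rep2
  have hmem : Quotient.out (1 : R2 h) - 1 ∈ Ideal.span {h.map bar} := by
    have h1 : Ideal.Quotient.mk (Ideal.span {h.map bar}) (Quotient.out (1 : R2 h))
        = Ideal.Quotient.mk (Ideal.span {h.map bar}) 1 := by
      rw [map_one]
      exact Quotient.out_eq (1 : R2 h)
    exact (Ideal.Quotient.mk_eq_mk_iff_sub_mem _ _).mp h1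
  obtain ⟨t, ht⟩ := Ideal.mem_span_singleton'.mp hmem
  have hout : Quotient.out (1 : R2 h) = 1 + t * (h.map bar) := by rw [ht]; ring
  rw [hout, Polynomial.add_modByMonic,
    (Polynomial.modByMonic_eq_zero_iff_dvd (hmon.map bar)).mpr (dvd_mul_left _ _), add_zero,
    Polynomial.modByMonic_eq_self_iff (hmon.map bar) |>.mpr]
  rw [Polynomial.degree_one, Polynomial.degree_eq_natDegree (hmon.map bar).ne_zero,
    hmon.natDegree_map]
  exact_mod_cast hdeg

lemma iota_one (hmon : h.Monic) (hdeg : 1 ≤ h.natDegree) : iota h 1 = 1 := by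
  unfold iota
  rw [rep2_one h hmon hdeg, show (1 : Z2[X]) = C 1 from C_1.symm,
    Polynomial.sum_C_index (by simp), pow_zero, mul_one,
    (by decide : (((1 : Z2).val : Z4)) = 1), map_one, map_one]

end Theta

/-- If the set of nonzero minimal-degree polynomials of a skew cyclic
code `C` of length `s` over `R₄` contains a monic polynomial, then
`C = ⟨g(x)+2a(x)⟩` with `g+2a` a right divisor of `x^s-1` in `R₄[x,θ₄]`, `ḡ` a right
divisor of `x^s-1` in `R₂[x,θ₂]` and `deg a < deg g`. -/
theorem skew_cyclic_monic_minimal_generator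
    (m : ℕ) (hm : 1 ≤ m) (h : Z4[X]) (hbp : BasicPrimitive h m)
    (θ4 : R4 h →+* R4 h) (hθ4 : ⇑θ4 = thetaFun4 h)
    (θ2 : R2 h →+* R2 h) (hθ2 : ⇑θ2 = thetaFun2 h)
    (s : ℕ) [NeZero s]
    (C : Set (Fin s → R4 h)) (hlin : IsLinearCode (R4 h) C)
    (hcyc : ∀ c ∈ C, skewShift θ4 c ∈ C)
    (hminmonic : ∃ c ∈ C, (c ≠ 0 ∧
        ∀ d ∈ C, d ≠ 0 → (wordPoly c).degree ≤ (wordPoly d).degree) ∧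
      (wordPoly c).Monic) :
    ∃ g a : Polynomial (R4 h),
      RDvd (ofPoly θ4 (g + 2 * a)) (xSkew (R4 h) θ4 ^ s - 1) ∧
      RDvd (ofPoly θ2 (g.map (barR h))) (xSkew (R2 h) θ2 ^ s - 1) ∧
      a.degree < g.degree ∧
      wordToQuot θ4 '' C =
        ↑(Submodule.span (Skew (R4 h) θ4)
          {(Submodule.Quotient.mk (p := skewIdeal (R4 h) θ4 s) (ofPoly θ4 (g + 2 * a)))}) := by
  classical
  obtain ⟨c, hcC, ⟨hc0, hmin⟩, hmonic⟩ := hminmonic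
  haveI : Nontrivial (R4 h) := nontrivial_R4 h hbp.2.2.1
  set f : Polynomial (R4 h) := wordPoly c with hf
  have hmonf : f.Monic := hmonic
  have hdeg1 : 1 ≤ h.natDegree := hbp.2.1 ▸ hm
  have hmon : h.Monic := hbp.1
  have hcommθ : ∀ a : R4 h, barR h (θ4 a) = θ2 (barR h a) :=
    theta_comm h hmon θ4 hθ4 θ2 hθ2
  -- decomposition f = G + 2 * aP
  have hiotabar : ∀ cc : R4 h, barR h (iota h (barR h cc)) = barR h cc :=
    fun cc => barR_iota h hmon (barR h cc)
  have hi0 : iota h (barR h (0 : R4 h)) = 0 := by rw [map_zero, iota_zero h hmon]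
  have hkerdec : ∀ cc : R4 h, ∃ β, cc - iota h (barR h cc) = 2 * β := fun cc =>
    ker_barR h hmon _ (by rw [map_sub, hiotabar, sub_self])
  choose βf hβf using hkerdec
  set adec : R4 h → R4 h := fun cc =>
    if cc - iota h (barR h cc) = 0 then 0 else βf cc with hadec
  have hadec_spec : ∀ cc, 2 * adec cc = cc - iota h (barR h cc) := by
    intro cc
    by_cases hz : cc - iota h (barR h cc) = 0
    · have ha : adec cc = 0 := by rw [hadec]; exact if_pos hz
      rw [ha, mul_zero, hz]
    · have ha : adec cc = βf cc := by rw [hadec]; exact if_neg hz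
      rw [ha, ← hβf cc]
  have hadec0 : adec 0 = 0 := by
    rw [hadec]
    exact if_pos (by rw [hi0, sub_zero])
  set G : Polynomial (R4 h) := f.sum fun i cc => Polynomial.C (iota h (barR h cc)) * X ^ i
    with hG
  set aP : Polynomial (R4 h) := f.sum fun i cc => Polynomial.C (adec cc) * X ^ i with haP
  have hGcoeff : ∀ k, G.coeff k = iota h (barR h (f.coeff k)) := fun k =>
    coeff_sum_map f (fun cc => iota h (barR h cc)) hi0 k
  have haPcoeff : ∀ k, aP.coeff k = adec (f.coeff k) := fun k =>
    coeff_sum_map f adec hadec0 k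
  have hfG : f = G + 2 * aP := by
    ext k
    rw [Polynomial.coeff_add, hGcoeff,
      show (2 * aP).coeff k = 2 * aP.coeff k by rw [two_mul, Polynomial.coeff_add, ← two_mul],
      haPcoeff, hadec_spec]
    ring
  -- degrees
  have hftop : f.coeff f.natDegree = 1 := hmonf
  have hGcoefftop : G.coeff f.natDegree = 1 := by
    rw [hGcoeff, hftop, map_one, iota_one h hmon hdeg1]
  have hGhigh : ∀ k, f.natDegree < k → G.coeff k = 0 := fun k hk => by
    rw [hGcoeff, Polynomial.coeff_eq_zero_of_natDegree_lt hk, hi0]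
  have hGne : G ≠ 0 := fun hz => by
    have h1 := hGcoefftop
    rw [hz, Polynomial.coeff_zero] at h1
    exact one_ne_zero h1.symm
  have hGnat : G.natDegree = f.natDegree := le_antisymm
    (Polynomial.natDegree_le_iff_coeff_eq_zero.mpr hGhigh)
    (Polynomial.le_natDegree_of_ne_zero (by rw [hGcoefftop]; exact one_ne_zero))
  have hGdegeq : G.degree = (f.natDegree : WithBot ℕ) := by
    rw [Polynomial.degree_eq_natDegree hGne, hGnat]
  have haPlt : aP.degree < G.degree := by
    rw [hGdegeq, Polynomial.degree_lt_iff_coeff_zero]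
    intro k hk
    rw [haPcoeff]
    rcases eq_or_lt_of_le hk with hk1 | hk1
    · rw [← hk1, hftop, hadec]
      exact if_pos (by rw [map_one, iota_one h hmon hdeg1, sub_self])
    · rw [Polynomial.coeff_eq_zero_of_natDegree_lt hk1, hadec0]
  -- quotient module facts
  obtain ⟨W, hW⟩ := image_code_submodule θ4 C hlin hcyc
  have hWmem : ∀ y : SkewQuot (R4 h) θ4 s, y ∈ W ↔ y ∈ wordToQuot θ4 '' C := fun y =>
    Iff.trans (SetLike.mem_coe).symm (Set.ext_iff.mp hW y)
  have hfdegs : f.degree < (s : WithBot ℕ) := wordPoly_degree_lt c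
  have hMmon : ((X : Polynomial (R4 h)) ^ s - 1).Monic := by
    have h1 := Polynomial.monic_X_pow_sub_C (1 : R4 h) (NeZero.ne s)
    rwa [map_one] at h1
  have hMdeg : ((X : Polynomial (R4 h)) ^ s - 1).degree = (s : WithBot ℕ) := by
    rw [Polynomial.degree_eq_natDegree hMmon.ne_zero]
    congr 1
    have h1 := Polynomial.natDegree_X_pow_sub_C (n := s) (r := (1 : R4 h))
    rwa [map_one] at h1
  have hinj : ∀ p : Polynomial (R4 h), p.degree < (s : WithBot ℕ) →
      ofPoly θ4 p ∈ skewIdeal (R4 h) θ4 s → p = 0 := by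
    intro p hpdeg hpmem
    obtain ⟨w, hw⟩ := Submodule.mem_span_singleton.mp hpmem
    have heqc : skewConv θ4 (toPoly w) ((X : Polynomial (R4 h)) ^ s - 1) = p := by
      have h1 := congrArg toPoly hw
      rw [smul_eq_mul, toPoly_mul, toPoly_sub, toPoly_xSkew_pow, toPoly_one,
        toPoly_ofPoly] at h1
      exact h1
    have hz : toPoly w = 0 := by
      apply skewConv_eq_zero_of_degree_lt θ4 hMmon
      rw [heqc, hMdeg]
      exact hpdeg
    rw [← heqc, hz, skewConv_zero_left]
  have hwordinj : ∀ (u : Fin s → R4 h) (r : Polynomial (R4 h)),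
      r.degree < (s : WithBot ℕ) →
      wordToQuot θ4 u = Submodule.Quotient.mk (ofPoly θ4 r) → wordPoly u = r := by
    intro u r hrdeg hequot
    have hmem := (Submodule.Quotient.eq (skewIdeal (R4 h) θ4 s)).mp hequot
    rw [← ofPoly_sub] at hmem
    have hsubdeg : (wordPoly u - r).degree < (s : WithBot ℕ) :=
      lt_of_le_of_lt (Polynomial.degree_sub_le _ _) (max_lt (wordPoly_degree_lt u) hrdeg)
    exact sub_eq_zero.mp (hinj _ hsubdeg hmem)
  have hremzero : ∀ rr : Polynomial (R4 h), rr.degree < f.degree →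
      (Submodule.Quotient.mk (ofPoly θ4 rr) : SkewQuot (R4 h) θ4 s) ∈ wordToQuot θ4 '' C →
      rr = 0 := by
    intro rr hrrdeg hrrmem
    obtain ⟨v, hv, hveq⟩ := hrrmem
    have hrrs : rr.degree < (s : WithBot ℕ) := lt_trans hrrdeg hfdegs
    have hwp : wordPoly v = rr := hwordinj v rr hrrs hveq
    by_cases hv0 : v = 0
    · rw [← hwp, hv0, wordPoly_zero]
    · exfalso
      have h1 := hmin v hv hv0
      rw [hwp] at h1
      exact absurd (lt_of_le_of_lt h1 hrrdeg) (lt_irrefl _)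
  have hprodmem : ∀ qq : Polynomial (R4 h),
      (Submodule.Quotient.mk (ofPoly θ4 (skewConv θ4 qq f)) : SkewQuot (R4 h) θ4 s)
        ∈ wordToQuot θ4 '' C := by
    intro qq
    have heq : (Submodule.Quotient.mk (ofPoly θ4 (skewConv θ4 qq f)) : SkewQuot (R4 h) θ4 s)
        = (ofPoly θ4 qq) • Submodule.Quotient.mk (ofPoly θ4 f) := by
      rw [ofPoly_mul, ← smul_eq_mul, Submodule.Quotient.mk_smul]
    rw [heq]
    exact (hWmem _).mp (W.smul_mem _ ((hWmem _).mpr ⟨c, hcC, rfl⟩))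
  obtain ⟨qd, rd, hdiveq, hdivlt⟩ := skewDiv_aux θ4 hmonf
    ((X : Polynomial (R4 h)) ^ s - 1).natDegree ((X : Polynomial (R4 h)) ^ s - 1) le_rfl
  have hXmk : (Submodule.Quotient.mk (ofPoly θ4 ((X : Polynomial (R4 h)) ^ s - 1))
      : SkewQuot (R4 h) θ4 s) = 0 := by
    rw [Submodule.Quotient.mk_eq_zero, ofPoly_sub, ofPoly_X_pow, ofPoly_one]
    exact Submodule.mem_span_singleton_self _
  have hrd0 : rd = 0 := by
    apply hremzero rd hdivlt
    have hsplit : (0 : SkewQuot (R4 h) θ4 s)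
        = Submodule.Quotient.mk (ofPoly θ4 (skewConv θ4 qd f))
          + Submodule.Quotient.mk (ofPoly θ4 rd) := by
      rw [← hXmk, show ((X : Polynomial (R4 h)) ^ s - 1) = skewConv θ4 qd f + rd from hdiveq,
        ofPoly_add, Submodule.Quotient.mk_add]
    have hneg : (Submodule.Quotient.mk (ofPoly θ4 rd) : SkewQuot (R4 h) θ4 s)
        = -(Submodule.Quotient.mk (ofPoly θ4 (skewConv θ4 qd f)) : SkewQuot (R4 h) θ4 s) := by
      rw [eq_neg_iff_add_eq_zero, add_comm]
      exact hsplit.symm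
    rw [hneg]
    exact (hWmem _).mp (W.neg_mem ((hWmem _).mpr (hprodmem qd)))
  have hXfact : ((X : Polynomial (R4 h)) ^ s - 1) = skewConv θ4 qd f := by
    rw [hdiveq, hrd0, add_zero]
  refine ⟨G, aP, ?_, ?_, haPlt, ?_⟩
  · refine ⟨ofPoly θ4 qd, ?_⟩
    rw [← hfG, ← ofPoly_mul, ← hXfact, ofPoly_sub, ofPoly_X_pow, ofPoly_one]
  · have hmapf : f.map (barR h) = G.map (barR h) := by
      rw [hfG, Polynomial.map_add, Polynomial.map_mul, Polynomial.map_ofNat,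
        two_R2X_eq_zero h, zero_mul, add_zero]
    have hbar : ((X : Polynomial (R2 h)) ^ s - 1)
        = skewConv θ2 (qd.map (barR h)) (G.map (barR h)) := by
      have hmapped := congrArg (Polynomial.map (barR h)) hXfact
      rw [Polynomial.map_sub, Polynomial.map_pow, Polynomial.map_X, Polynomial.map_one,
        skewConv_map (barR h) θ4 θ2 hcommθ, hmapf] at hmapped
      exact hmapped
    refine ⟨ofPoly θ2 (qd.map (barR h)), ?_⟩
    rw [← ofPoly_mul, ← hbar, ofPoly_sub, ofPoly_X_pow, ofPoly_one]
  · rw [← hfG]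
    apply Set.Subset.antisymm
    · rintro _ ⟨u, hu, rfl⟩
      obtain ⟨q, r, hqr, hrlt⟩ := skewDiv_aux θ4 hmonf (wordPoly u).natDegree
        (wordPoly u) le_rfl
      have hr0 : r = 0 := by
        apply hremzero r hrlt
        have heq2 : (Submodule.Quotient.mk (ofPoly θ4 r) : SkewQuot (R4 h) θ4 s)
            = wordToQuot θ4 u
              - Submodule.Quotient.mk (ofPoly θ4 (skewConv θ4 q f)) := by
          show _ = Submodule.Quotient.mk (ofPoly θ4 (wordPoly u)) - _
          rw [← Submodule.Quotient.mk_sub, ← ofPoly_sub]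
          congr 2
          rw [hqr]
          ring
        rw [heq2]
        exact (hWmem _).mp
          (W.sub_mem ((hWmem _).mpr ⟨u, hu, rfl⟩) ((hWmem _).mpr (hprodmem q)))
      apply Submodule.mem_span_singleton.mpr
      refine ⟨ofPoly θ4 q, ?_⟩
      rw [← Submodule.Quotient.mk_smul, smul_eq_mul, ← ofPoly_mul]
      show _ = Submodule.Quotient.mk (ofPoly θ4 (wordPoly u))
      congr 2
      rw [hqr, hr0, add_zero]
    · have hgen : (Submodule.Quotient.mk (ofPoly θ4 f) : SkewQuot (R4 h) θ4 s) ∈ W :=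
        (hWmem _).mpr ⟨c, hcC, rfl⟩
      have hle : Submodule.span (Skew (R4 h) θ4)
          {(Submodule.Quotient.mk (ofPoly θ4 f) : SkewQuot (R4 h) θ4 s)} ≤ W :=
        Submodule.span_le.mpr (Set.singleton_subset_iff.mpr hgen)
      intro y hy
      exact (hWmem y).mp (hle hy)
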